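/- Let H : ℝ^d → ℝ be differentiable at x ∈ ℝ^d with gradient ∇H(x), and let ∇̄H : ℝ^d × ℝ^d → ℝ^d satisfy the discrete gradient condition ⟨∇̄H(x,y), y − x⟩ = H(y) − H(x) for all y ∈ ℝ^d. If the map y ↦ ∇̄H(x,y) is differentiable at y = x, then the consistency condition ∇̄H(x,x) = ∇H(x) holds automatically. -/

import Mathlib

open scoped RealInnerProductSpace

/-- For a differentiable (in the second argument) discrete gradient, the
consistency condition `∇̄H(x,x) = ∇H(x)` follows from the discrete gradient condition. -/
theorem discrete_gradient_consistency
    (d : ℕ) (H : EuclideanSpace ℝ (Fin d) → ℝ) (x : EuclideanSpace ℝ (Fin d))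
    (hH : DifferentiableAt ℝ H x)
    (dg : EuclideanSpace ℝ (Fin d) → EuclideanSpace ℝ (Fin d) → EuclideanSpace ℝ (Fin d))
    (hdg : ∀ y, ⟪dg x y, y - x⟫ = H y - H x)
    (hdiff : DifferentiableAt ℝ (dg x) x) :
    dg x x = gradient H x := by
  have h2 : HasFDerivAt (fun y : EuclideanSpace ℝ (Fin d) => y - x)
      (ContinuousLinearMap.id ℝ (EuclideanSpace ℝ (Fin d))) x :=
    (hasFDerivAt_id x).sub_const x
  have h3 := hdiff.hasFDerivAt.inner ℝ h2
  have heq : (fun y => ⟪dg x y, y - x⟫) = fun y => H y - H x := funext hdg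
  rw [heq] at h3
  have h4 : HasFDerivAt H ((fderivInnerCLM ℝ (dg x x, x - x)).comp
      ((fderiv ℝ (dg x) x).prod (ContinuousLinearMap.id ℝ (EuclideanSpace ℝ (Fin d))))) x := by
    have := h3.add_const (H x)
    simpa using this
  have hg : HasGradientAt H (dg x x) x := by
    rw [hasGradientAt_iff_hasFDerivAt]
    refine h4.congr_fderiv ?_
    ext v
    simp [fderivInnerCLM, real_inner_comm]
  exact hg.unique hH.hasGradientAt
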